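/- Let G be a countable group with an S-UCP convexoid C for a finite set S with |S| ≥ 2, and let X be the SFT defined by a 1-TEP family T ⊆ A^S. Then |X| ≥ |A|^{|S|-1}. If instead T is k-TEP with k ≥ 2 and A nonempty, then X is homeomorphic to the Cantor set (in particular uncountable). -/

import Mathlib

open Pointwise

attribute [local instance] Classical.propDecidable

/-- The closure of a finite set `B`: intersection of all members of `𝒞` containing `B`. -/
def memClosure {G : Type*} (𝒞 : Set (Finset G)) (B : Finset G) : Set G :=
  {x | ∀ C ∈ 𝒞, B ⊆ C → x ∈ C}

/-- A convexoid: `∅` is a member, every finite set is contained in some member, and the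
corner addition property holds. -/
def IsConvexoid {G : Type*} (𝒞 : Set (Finset G)) : Prop :=
  (∅ : Finset G) ∈ 𝒞 ∧ (∀ B : Finset G, ∃ C ∈ 𝒞, B ⊆ C) ∧
    ∀ C ∈ 𝒞, ∀ D ∈ 𝒞, C ⊂ D → ∃ a ∈ D, a ∉ C ∧ insert a C ∈ 𝒞

/-- `S`-unique corner positioning: each lax corner of a convex set is covered by at most
one translate of `S` inside the set. -/
def SUCP {G : Type*} [Group G] (𝒞 : Set (Finset G)) (S : Finset G) : Prop :=
  ∀ C ∈ 𝒞, ∀ a ∈ C, a ∉ memClosure 𝒞 (C.erase a) →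
    ∀ g₁ g₂ : G, a ∈ g₁ • S → g₁ • S ⊆ C → a ∈ g₂ • S → g₂ • S ⊆ C → g₁ = g₂

/-- `T ⊆ A^S` has `k`-uniform extensions at `s₀ ∈ S`: however the other coordinates are
filled, exactly `k` values at `s₀` give a pattern in `T`. -/
def uniformExt {G : Type*} {A : Type*} (S : Finset G) (T : Set (S → A)) (s₀ : S)
    (k : ℕ) : Prop :=
  ∀ Q : S → A, {b : A | (fun s : S => if s = s₀ then b else Q s) ∈ T}.ncard = k

/-- `s ∈ S` is a translated lax corner of `S` (w.r.t. `𝒞`). -/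
def IsTranslatedLaxCorner {G : Type*} [Group G] (𝒞 : Set (Finset G)) (S : Finset G)
    (s : S) : Prop :=
  ∃ g : G, g * (s : G) ∉ memClosure 𝒞 ((g • S).erase (g * (s : G)))

/-- `T` is `k`-TEP: it has `k`-uniform extensions at every translated lax corner of `S`. -/
def IsTEP {G : Type*} [Group G] {A : Type*} (𝒞 : Set (Finset G)) (S : Finset G)
    (T : Set (S → A)) (k : ℕ) : Prop :=
  ∀ s : S, IsTranslatedLaxCorner 𝒞 S s → uniformExt S T s k

/-- `x` is `T`-legal on `C`: every translate of `S` inside `C` carries a pattern of `T`. -/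
def legalOn {G : Type*} [Group G] {A : Type*} (S : Finset G) (T : Set (S → A))
    (x : G → A) (C : Finset G) : Prop :=
  ∀ g : G, g • S ⊆ C → (fun s : S => x (g * (s : G))) ∈ T

/-- The SFT defined by the allowed patterns `T ⊆ A^S`. -/
def TEPX {G : Type*} [Group G] {A : Type*} (S : Finset G) (T : Set (S → A)) :
    Set (G → A) :=
  {x | ∀ g : G, (fun s : S => x (g * (s : G))) ∈ T}
set_option linter.unusedSectionVars false
set_option linter.unusedVariables false
set_option maxHeartbeats 1000000

section Lemmas

variable {G : Type*} [Group G] {A : Type*} {𝒞 : Set (Finset G)} {S : Finset G}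
  {T : Set (S → A)} {k : ℕ}

lemma memClosure_mono {B B' : Finset G} (h : B ⊆ B') :
    memClosure 𝒞 B ⊆ memClosure 𝒞 B' := by
  intro x hx C hC hBC
  exact hx C hC (h.trans hBC)

lemma not_mem_memClosure_self {C : Finset G} (hC : C ∈ 𝒞) {a : G} (ha : a ∉ C) :
    a ∉ memClosure 𝒞 C := fun h => ha (h C hC (subset_refl _))

lemma legalOn_congr {p q : G → A} {C : Finset G}
    (hpq : ∀ g ∈ C, p g = q g) (hp : legalOn S T p C) : legalOn S T q C := by
  intro g hg
  have := hp g hg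
  convert this using 2 with s
  exact (hpq _ (hg (by
    rw [Finset.mem_smul_finset]
    exact ⟨s, s.2, rfl⟩))).symm

lemma legalOn_mono {p : G → A} {C D : Finset G} (hCD : C ⊆ D)
    (hp : legalOn S T p D) : legalOn S T p C :=
  fun g hg => hp g (hg.trans hCD)

lemma legalOn_of_card_lt {p : G → A} {C : Finset G}
    (h : C.card < S.card) : legalOn S T p C := by
  intro g hg
  exact absurd (Finset.card_le_card hg) (by simp [Finset.card_smul_finset]; omega)

lemma legalOn_TEPX {x : G → A} (hx : x ∈ TEPX S T) (C : Finset G) :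
    legalOn S T x C := fun g _ => hx g

/-- The key corner-step lemma: after a corner addition, either the new cell is not covered
by any translate of `S` and every value is legal, or the set of legal values has size `k`. -/
lemma step_count (hconv : IsConvexoid 𝒞) (hucp : SUCP 𝒞 S) (htep : IsTEP 𝒞 S T k)
    {C : Finset G} (hC : C ∈ 𝒞) {a : G} (ha : a ∉ C) (hCa : insert a C ∈ 𝒞)
    {p : G → A} (hp : legalOn S T p C) :
    (¬ (∃ g : G, a ∈ g • S ∧ g • S ⊆ insert a C) ∧
      ∀ b : A, legalOn S T (Function.update p a b) (insert a C)) ∨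
    ((∃ g : G, a ∈ g • S ∧ g • S ⊆ insert a C) ∧
      {b : A | legalOn S T (Function.update p a b) (insert a C)}.ncard = k) := by
  have haC : a ∉ memClosure 𝒞 ((insert a C).erase a) := by
    rw [Finset.erase_insert ha]
    exact not_mem_memClosure_self hC ha
  -- legality for translates avoiding `a`
  have hother : ∀ (b : A) (g : G), g • S ⊆ insert a C → a ∉ g • S →
      (fun s : S => Function.update p a b (g * (s : G))) ∈ T := by
    intro b g hg hag
    have hgC : g • S ⊆ C := by
      intro y hy
      rcases Finset.mem_insert.1 (hg hy) with h | h
      · exact absurd (h ▸ hy) hag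
      · exact h
    have := hp g hgC
    convert this using 2 with s
    have : g * (s : G) ≠ a := by
      intro h
      exact hag (h ▸ (by rw [Finset.mem_smul_finset]; exact ⟨s, s.2, rfl⟩))
    simp [Function.update, this]
  by_cases hcov : ∃ g : G, a ∈ g • S ∧ g • S ⊆ insert a C
  · right
    refine ⟨hcov, ?_⟩
    obtain ⟨g, hag, hgsub⟩ := hcov
    obtain ⟨s₀, hs₀S, hs₀⟩ := Finset.mem_smul_finset.1 hag
    have hs₀' : g * s₀ = a := hs₀
    -- s₀ is a translated lax corner
    have hcorner : IsTranslatedLaxCorner 𝒞 S ⟨s₀, hs₀S⟩ := by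
      refine ⟨g, ?_⟩
      show g * s₀ ∉ memClosure 𝒞 ((g • S).erase (g * s₀))
      rw [hs₀']
      intro hmem
      exact haC (memClosure_mono (Finset.erase_subset_erase _ hgsub) hmem)
    -- pointwise description of the pattern at the unique covering translate
    set s₀' : (S : Finset G) := ⟨s₀, hs₀S⟩ with hs₀'def
    set Q : S → A := fun s => p (g * (s : G)) with hQ
    have hpattern : ∀ b : A, (fun s : S => Function.update p a b (g * (s : G)))
        = (fun s : S => if s = s₀' then b else Q s) := by
      intro b
      funext s
      by_cases hs : s = s₀'
      · subst hs
        simp [hs₀'def, hs₀', Function.update]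
      · have hne : g * (s : G) ≠ a := by
          intro h
          apply hs
          apply Subtype.ext
          exact mul_left_cancel (h.trans hs₀'.symm)
        simp [Function.update, hne, hs, hQ]
    have hseteq : {b : A | legalOn S T (Function.update p a b) (insert a C)}
        = {b : A | (fun s : S => if s = s₀' then b else Q s) ∈ T} := by
      ext b
      simp only [Set.mem_setOf_eq]
      constructor
      · intro hl
        have := hl g hgsub
        rwa [hpattern b] at this
      · intro hb
        intro g' hg'
        by_cases hag' : a ∈ g' • S
        · have : g' = g := hucp (insert a C) hCa a (Finset.mem_insert_self a C) haC
            g' g hag' hg' hag hgsub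
          subst this
          rwa [hpattern b]
        · exact hother b g' hg' hag'
    rw [hseteq]
    exact htep s₀' hcorner Q
  · left
    refine ⟨hcov, fun b => ?_⟩
    intro g hg
    by_cases hag : a ∈ g • S
    · exact absurd ⟨g, hag, hg⟩ hcov
    · exact hother b g hg hag

end Lemmas
section Lemmas2

variable {G : Type*} [Group G] {A : Type*} {𝒞 : Set (Finset G)} {S : Finset G}
  {T : Set (S → A)} {k : ℕ}

/-- Any strict inclusion of convex sets has a "last corner". -/
lemma exists_last_corner (hconv : IsConvexoid 𝒞) :
    ∀ n (C : Finset G), C ∈ 𝒞 → ∀ D : Finset G, D ∈ 𝒞 → C ⊂ D → D.card ≤ C.card + n →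
      ∃ C' ∈ 𝒞, C' ⊆ D ∧ ∃ a ∈ D, a ∉ C' ∧ D = insert a C' := by
  intro n
  induction n with
  | zero =>
    intro C hC D hD hCD hcard
    exact absurd (Finset.card_lt_card hCD) (by omega)
  | succ n ih =>
    intro C hC D hD hCD hcard
    obtain ⟨a, haD, haC, hins⟩ := hconv.2.2 C hC D hD hCD
    by_cases h : insert a C = D
    · exact ⟨C, hC, hCD.subset, a, haD, haC, h.symm⟩
    · have hsub : insert a C ⊆ D := Finset.insert_subset haD hCD.subset
      have : insert a C ⊂ D := ssubset_of_subset_of_ne hsub h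
      exact ih (insert a C) hins D hD this
        (by rw [Finset.card_insert_of_notMem haC]; omega)

/-- Inside a convex set, there are convex subsets of every smaller size. -/
lemma exists_sized_subconvex (hconv : IsConvexoid 𝒞) :
    ∀ n (C : Finset G), C ∈ 𝒞 → ∀ D : Finset G, D ∈ 𝒞 → C ⊆ D → C.card + n ≤ D.card →
      ∃ C'' ∈ 𝒞, C'' ⊆ D ∧ C''.card = C.card + n := by
  intro n
  induction n with
  | zero => intro C hC D hD hCD _; exact ⟨C, hC, hCD, rfl⟩
  | succ n ih =>
    intro C hC D hD hCD hcard
    have hne : C ≠ D := by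
      intro h; subst h; omega
    obtain ⟨a, haD, haC, hins⟩ := hconv.2.2 C hC D hD (ssubset_of_subset_of_ne hCD hne)
    obtain ⟨C'', h1, h2, h3⟩ := ih (insert a C) hins D hD
      (Finset.insert_subset haD hCD) (by rw [Finset.card_insert_of_notMem haC]; omega)
    exact ⟨C'', h1, h2, by rw [h3, Finset.card_insert_of_notMem haC]; omega⟩

/-- A legal pattern on a convex set extends to any larger convex set (if `k ≥ 1`). -/
lemma extend_legal [Nonempty A] (hconv : IsConvexoid 𝒞) (hucp : SUCP 𝒞 S)
    (htep : IsTEP 𝒞 S T k) (hk : 1 ≤ k) :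
    ∀ n (C : Finset G), C ∈ 𝒞 → ∀ D : Finset G, D ∈ 𝒞 → C ⊆ D → D.card ≤ C.card + n →
      ∀ p : G → A, legalOn S T p C →
        ∃ q : G → A, (∀ g ∈ C, q g = p g) ∧ legalOn S T q D := by
  intro n
  induction n with
  | zero =>
    intro C hC D hD hCD hcard p hp
    have : C = D := Finset.eq_of_subset_of_card_le hCD hcard
    exact ⟨p, fun g _ => rfl, this ▸ hp⟩
  | succ n ih =>
    intro C hC D hD hCD hcard p hp
    by_cases h : C = D
    · exact ⟨p, fun g _ => rfl, h ▸ hp⟩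
    · obtain ⟨a, haD, haC, hins⟩ := hconv.2.2 C hC D hD (ssubset_of_subset_of_ne hCD h)
      have hstep := step_count hconv hucp htep hC haC hins hp
      have hex : ∃ b : A, legalOn S T (Function.update p a b) (insert a C) := by
        rcases hstep with ⟨_, hall⟩ | ⟨_, hcount⟩
        · exact ⟨Classical.arbitrary A, hall _⟩
        · obtain ⟨b, hb⟩ := Set.nonempty_of_ncard_ne_zero (by rw [hcount]; omega)
          exact ⟨b, hb⟩
      obtain ⟨b, hb⟩ := hex
      obtain ⟨q, hq1, hq2⟩ := ih (insert a C) hins D hD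
        (Finset.insert_subset haD hCD) (by rw [Finset.card_insert_of_notMem haC]; omega)
        (Function.update p a b) hb
      refine ⟨q, fun g hg => ?_, hq2⟩
      rw [hq1 g (Finset.mem_insert_of_mem hg)]
      have : g ≠ a := fun h => haC (h ▸ hg)
      simp [Function.update, this]

variable [Fintype A] [TopologicalSpace A] [DiscreteTopology A]

lemma isClosed_legal_agree {E D : Finset G} {p : G → A} :
    IsClosed {y : G → A | (∀ g ∈ E, y g = p g) ∧ legalOn S T y D} := by
  apply IsClosed.inter
  · show IsClosed {y : G → A | ∀ g ∈ E, y g = p g}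
    have : {y : G → A | ∀ g ∈ E, y g = p g} = ⋂ g ∈ E, {y | y g = p g} := by
      ext y; simp
    rw [this]
    exact isClosed_biInter fun g _ => isClosed_eq (continuous_apply g) continuous_const
  · show IsClosed {y : G → A | legalOn S T y D}
    have : {y : G → A | legalOn S T y D}
        = ⋂ g : G, {y | g • S ⊆ D → (fun s : S => y (g * (s : G))) ∈ T} := by
      ext y; simp [legalOn]
    rw [this]
    refine isClosed_iInter fun g => ?_
    by_cases h : g • S ⊆ D
    · have : {y : G → A | g • S ⊆ D → (fun s : S => y (g * (s : G))) ∈ T}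
          = (fun (y : G → A) => fun s : S => y (g * (s : G))) ⁻¹' T := by
        ext y; simp [h]
      rw [this]
      exact (isClosed_discrete T).preimage (continuous_pi fun s => continuous_apply _)
    · have : {y : G → A | g • S ⊆ D → (fun s : S => y (g * (s : G))) ∈ T} = Set.univ := by
        ext y; simp [h]
      rw [this]; exact isClosed_univ

lemma isClosed_TEPX : IsClosed (TEPX S T : Set (G → A)) := by
  have : (TEPX S T : Set (G → A))
      = ⋂ g : G, (fun (y : G → A) => fun s : S => y (g * (s : G))) ⁻¹' T := by
    ext y; simp [TEPX]
  rw [this]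
  exact isClosed_iInter fun g =>
    (isClosed_discrete T).preimage (continuous_pi fun s => continuous_apply _)

/-- A legal pattern on a convex set extends to a point of the subshift. -/
lemma exists_TEPX_extend [Nonempty A] (hconv : IsConvexoid 𝒞) (hucp : SUCP 𝒞 S)
    (htep : IsTEP 𝒞 S T k) (hk : 1 ≤ k) {E : Finset G} (hE : E ∈ 𝒞) {p : G → A}
    (hp : legalOn S T p E) :
    ∃ x ∈ TEPX S T, ∀ g ∈ E, x g = p g := by
  let ι := {D : Finset G // D ∈ 𝒞 ∧ E ⊆ D}
  haveI : Nonempty ι := ⟨⟨E, hE, subset_refl E⟩⟩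
  let Z : ι → Set (G → A) := fun D => {y | (∀ g ∈ E, y g = p g) ∧ legalOn S T y D.1}
  have hdir : Directed (· ⊇ ·) Z := by
    intro D₁ D₂
    obtain ⟨D₃, hD₃, hsub⟩ := hconv.2.1 (D₁.1 ∪ D₂.1)
    refine ⟨⟨D₃, hD₃, D₁.2.2.trans ((Finset.subset_union_left).trans hsub)⟩, ?_, ?_⟩
    · exact fun y hy => ⟨hy.1, legalOn_mono ((Finset.subset_union_left).trans hsub) hy.2⟩
    · exact fun y hy => ⟨hy.1, legalOn_mono ((Finset.subset_union_right).trans hsub) hy.2⟩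
  have hne : ∀ D : ι, (Z D).Nonempty := by
    intro D
    obtain ⟨q, hq1, hq2⟩ := extend_legal hconv hucp htep hk D.1.card E hE D.1 D.2.1 D.2.2
      (by omega) p hp
    exact ⟨q, hq1, hq2⟩
  have hcl : ∀ D : ι, IsClosed (Z D) := fun D => isClosed_legal_agree
  have hcpt : ∀ D : ι, IsCompact (Z D) := fun D => (hcl D).isCompact
  obtain ⟨y, hy⟩ := IsCompact.nonempty_iInter_of_directed_nonempty_isCompact_isClosed
    Z hdir hne hcpt hcl
  simp only [Set.mem_iInter] at hy
  refine ⟨y, ?_, fun g hg => (hy ⟨E, hE, subset_refl E⟩).1 g hg⟩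
  intro g
  obtain ⟨D, hD, hsub⟩ := hconv.2.1 (E ∪ g • S)
  have := (hy ⟨D, hD, (Finset.subset_union_left).trans hsub⟩).2
  exact this g ((Finset.subset_union_right).trans hsub)

/-- The hypotheses force `G` to be infinite. -/
lemma G_infinite (hS : 2 ≤ S.card) (hconv : IsConvexoid 𝒞) (hucp : SUCP 𝒞 S) :
    Infinite G := by
  by_contra hfin
  rw [not_infinite_iff_finite] at hfin
  haveI := Fintype.ofFinite G
  obtain ⟨D, hD, hsub⟩ := hconv.2.1 Finset.univ
  have hDuniv : D = Finset.univ := Finset.univ_subset_iff.mp hsub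
  have hDne : D.Nonempty := by
    rw [hDuniv]; exact Finset.univ_nonempty
  have hssub : ∅ ⊂ D := Finset.empty_ssubset.2 hDne
  obtain ⟨C', hC', hC'D, a, haD, haC', hDins⟩ :=
    exists_last_corner hconv D.card ∅ hconv.1 D hD hssub (by simp)
  have herase : D.erase a = C' := by
    rw [hDins, Finset.erase_insert haC']
  have hclo : a ∉ memClosure 𝒞 (D.erase a) := by
    rw [herase]; exact not_mem_memClosure_self hC' haC'
  obtain ⟨s₁, hs₁, s₂, hs₂, hne⟩ := Finset.one_lt_card.1 (by omega : 1 < S.card)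
  have hmem : ∀ s ∈ S, a ∈ (a * s⁻¹) • S := by
    intro s hs
    rw [Finset.mem_smul_finset]
    exact ⟨s, hs, by simp [smul_eq_mul]⟩
  have hsubD : ∀ g : G, g • S ⊆ D := by
    intro g; rw [hDuniv]; exact Finset.subset_univ _
  have := hucp D hD a haD hclo (a * s₁⁻¹) (a * s₂⁻¹) (hmem s₁ hs₁) (hsubD _)
    (hmem s₂ hs₂) (hsubD _)
  exact hne (inv_injective (mul_left_cancel this))

end Lemmas2
section Part1

variable {G : Type*} [Group G] {A : Type*} {𝒞 : Set (Finset G)} {S : Finset G}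
  {T : Set (S → A)}

lemma part1_main [Fintype A] [TopologicalSpace A] [DiscreteTopology A]
    (hS : 2 ≤ S.card) (hconv : IsConvexoid 𝒞) (hucp : SUCP 𝒞 S)
    (htep : IsTEP 𝒞 S T 1) :
    (Fintype.card A : Cardinal) ^ (S.card - 1) ≤ Cardinal.mk (TEPX S T) := by
  by_cases hA : Nonempty A
  case neg =>
    have : Fintype.card A = 0 := Fintype.card_eq_zero_iff.2 (not_nonempty_iff.1 hA)
    rw [this]
    push_cast
    rw [zero_pow (by omega : S.card - 1 ≠ 0)]
    exact zero_le
  case pos =>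
    obtain ⟨D, hD, hSD⟩ := hconv.2.1 S
    obtain ⟨C₀, hC₀, hC₀D, hcard⟩ := exists_sized_subconvex hconv (S.card - 1) ∅ hconv.1
      D hD (Finset.empty_subset D) (by
        have := Finset.card_le_card hSD; simp; omega)
    simp only [Finset.card_empty, Nat.zero_add] at hcard
    -- from each `ρ : C₀ → A` build a point of the subshift
    have hbuild : ∀ ρ : C₀ → A, ∃ x ∈ TEPX S T, ∀ g : G, ∀ h : g ∈ C₀, x g = ρ ⟨g, h⟩ := by
      intro ρ
      set p : G → A := fun g => if h : g ∈ C₀ then ρ ⟨g, h⟩ else Classical.arbitrary A with hp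
      have hleg : legalOn S T p C₀ := legalOn_of_card_lt (by omega)
      obtain ⟨x, hx1, hx2⟩ := exists_TEPX_extend hconv hucp htep le_rfl hC₀ hleg
      refine ⟨x, hx1, fun g h => ?_⟩
      rw [hx2 g h, hp]
      simp [h]
    choose F hF1 hF2 using hbuild
    have hinj : Function.Injective (fun ρ => (⟨F ρ, hF1 ρ⟩ : TEPX S T)) := by
      intro ρ ρ' h
      funext s
      have h1 := hF2 ρ s s.2
      have h2 := hF2 ρ' s s.2
      simp only [Subtype.mk.injEq] at h
      rw [h] at h1
      rw [h2] at h1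
      exact (by simpa using h1.symm)
    calc (Fintype.card A : Cardinal) ^ (S.card - 1)
        = ((Fintype.card A ^ (S.card - 1) : ℕ) : Cardinal) := by push_cast; rfl
      _ = ((Nat.card (C₀ → A) : ℕ) : Cardinal) := by
          congr 1
          rw [Nat.card_fun, Nat.card_eq_finsetCard, hcard, Nat.card_eq_fintype_card]
      _ = Cardinal.mk (C₀ → A) := by
          rw [Cardinal.mk_fintype, Fintype.card_eq_nat_card]
      _ ≤ Cardinal.mk (TEPX S T) := Cardinal.mk_le_of_injective hinj

end Part1
section Chain

variable {G : Type*} [Group G] {𝒞 : Set (Finset G)}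

/-- One step of the chain machine. State: (current convex set, target convex set, counter). -/
lemma chain_step_ex (hconv : IsConvexoid 𝒞) [Infinite G] (e : ℕ → G)
    (st : {t : Finset G × Finset G × ℕ //
      t.1 ∈ 𝒞 ∧ t.2.1 ∈ 𝒞 ∧ t.1 ⊆ t.2.1 ∧ ∀ j < t.2.2, e j ∈ t.2.1}) :
    ∃ st' : {t : Finset G × Finset G × ℕ //
      t.1 ∈ 𝒞 ∧ t.2.1 ∈ 𝒞 ∧ t.1 ⊆ t.2.1 ∧ ∀ j < t.2.2, e j ∈ t.2.1},
      (∃ a, a ∉ st.1.1 ∧ st'.1.1 = insert a st.1.1) ∧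
      st.1.2.1 ⊆ st'.1.2.1 ∧
      (st.1.1 = st.1.2.1 → st'.1.2.2 = st.1.2.2 + 1) ∧
      (st.1.1 ≠ st.1.2.1 → st'.1.2.1 = st.1.2.1 ∧ st'.1.2.2 = st.1.2.2) := by
  obtain ⟨⟨C, D, t⟩, hC, hD, hCD, htar⟩ := st
  by_cases heq : C = D
  · obtain ⟨g₀, hg₀⟩ := Infinite.exists_notMem_finset D
    obtain ⟨D', hD', hsub⟩ := hconv.2.1 (insert (e t) (insert g₀ D))
    have hDD' : D ⊆ D' := fun y hy =>
      hsub (Finset.mem_insert_of_mem (Finset.mem_insert_of_mem hy))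
    have hCD' : C ⊂ D' := by
      rw [heq]
      refine ssubset_of_subset_of_ne hDD' ?_
      intro h
      exact hg₀ (h ▸ hsub (Finset.mem_insert_of_mem (Finset.mem_insert_self g₀ D)))
    obtain ⟨b, hbD', hbC, hins⟩ := hconv.2.2 C hC D' hD' hCD'
    refine ⟨⟨(insert b C, D', t + 1), hins, hD', Finset.insert_subset hbD'
      (heq ▸ hDD'), ?_⟩, ⟨b, hbC, rfl⟩, hDD', fun _ => rfl, fun h => absurd heq h⟩
    intro j hj
    rcases Nat.lt_succ_iff_lt_or_eq.1 hj with h | h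
    · exact hDD' (htar j h)
    · subst h; exact hsub (Finset.mem_insert_self _ _)
  · obtain ⟨b, hbD, hbC, hins⟩ := hconv.2.2 C hC D hD (ssubset_of_subset_of_ne hCD heq)
    exact ⟨⟨(insert b C, D, t), hins, hD, Finset.insert_subset hbD hCD, htar⟩,
      ⟨b, hbC, rfl⟩, subset_refl _, fun h => absurd h heq, fun _ => ⟨rfl, rfl⟩⟩

/-- An infinite single-step chain of convex sets exhausting the group. -/
lemma exists_chain (hconv : IsConvexoid 𝒞) [Countable G] [Infinite G] :
    ∃ (C : ℕ → Finset G) (a : ℕ → G),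
      C 0 = ∅ ∧ (∀ i, C i ∈ 𝒞) ∧ (∀ i, a i ∉ C i) ∧
      (∀ i, C (i + 1) = insert (a i) (C i)) ∧ (∀ g : G, ∃ i, g ∈ C i) := by
  obtain ⟨e, he⟩ := exists_surjective_nat G
  set St := {t : Finset G × Finset G × ℕ //
      t.1 ∈ 𝒞 ∧ t.2.1 ∈ 𝒞 ∧ t.1 ⊆ t.2.1 ∧ ∀ j < t.2.2, e j ∈ t.2.1} with hSt
  let st0 : St := ⟨(∅, ∅, 0), hconv.1, hconv.1, subset_refl _,
    fun j hj => absurd hj (Nat.not_lt_zero j)⟩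
  let F : ℕ → St := fun n => Nat.rec st0 (fun _ st => Classical.choose
    (chain_step_ex hconv e st)) n
  have hFsucc : ∀ n, F (n + 1) = Classical.choose (chain_step_ex hconv e (F n)) :=
    fun n => rfl
  set C : ℕ → Finset G := fun n => (F n).1.1 with hCdef
  set D : ℕ → Finset G := fun n => (F n).1.2.1 with hDdef
  set t : ℕ → ℕ := fun n => (F n).1.2.2 with htdef
  have hspec : ∀ n, (∃ a, a ∉ C n ∧ C (n + 1) = insert a (C n)) ∧
      D n ⊆ D (n + 1) ∧
      (C n = D n → t (n + 1) = t n + 1) ∧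
      (C n ≠ D n → D (n + 1) = D n ∧ t (n + 1) = t n) := fun n =>
    Classical.choose_spec (chain_step_ex hconv e (F n))
  have hmemC : ∀ n, C n ∈ 𝒞 := fun n => (F n).2.1
  have hCDsub : ∀ n, C n ⊆ D n := fun n => (F n).2.2.2.1
  have htar : ∀ n, ∀ j < t n, e j ∈ D n := fun n => (F n).2.2.2.2
  choose a ha1 ha2 using fun n => (hspec n).1
  have hCmono : ∀ i j, i ≤ j → C i ⊆ C j := by
    intro i j hij
    induction j with
    | zero => rw [Nat.le_zero.1 hij]
    | succ j ihj =>
      rcases eq_or_lt_of_le hij with h | h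
      · rw [h]
      · exact (ihj (Nat.lt_succ_iff.1 h)).trans
          (by rw [ha2 j]; exact Finset.subset_insert _ _)
  have hDmono : ∀ i j, i ≤ j → D i ⊆ D j := by
    intro i j hij
    induction j with
    | zero => rw [Nat.le_zero.1 hij]
    | succ j ihj =>
      rcases eq_or_lt_of_le hij with h | h
      · rw [h]
      · exact (ihj (Nat.lt_succ_iff.1 h)).trans (hspec j).2.1
  have htmono : ∀ i j, i ≤ j → t i ≤ t j := by
    intro i j hij
    induction j with
    | zero => rw [Nat.le_zero.1 hij]
    | succ j ihj =>
      have hstep : t j ≤ t (j + 1) := by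
        by_cases h : C j = D j
        · rw [(hspec j).2.2.1 h]; omega
        · rw [((hspec j).2.2.2 h).2]
      rcases eq_or_lt_of_le hij with h | h
      · rw [h]
      · exact le_trans (ihj (Nat.lt_succ_iff.1 h)) hstep
  have hcard : ∀ n, (C n).card = n := by
    intro n
    induction n with
    | zero => simp [hCdef]; rfl
    | succ n ihn => rw [ha2 n, Finset.card_insert_of_notMem (ha1 n), ihn]
  have hepoch : ∀ i, ∃ i', i ≤ i' ∧ C i' = D i' := by
    intro i
    by_contra hcon
    push_neg at hcon
    have hDconst : ∀ i', i ≤ i' → D i' = D i := by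
      intro i' hii'
      induction i' with
      | zero => rw [Nat.le_zero.1 hii']
      | succ i' ih =>
        rcases eq_or_lt_of_le hii' with h | h
        · rw [h]
        · have hle : i ≤ i' := Nat.lt_succ_iff.1 h
          rw [((hspec i').2.2.2 (hcon i' hle)).1, ih hle]
    set i' := max i ((D i).card + 1) with hi'
    have h1 : (C i').card ≤ (D i).card := by
      rw [← hDconst i' (le_max_left _ _)]
      exact Finset.card_le_card (hCDsub i')
    rw [hcard i'] at h1
    omega
  have htunb : ∀ N, ∃ i, N ≤ t i := by
    intro N
    induction N with
    | zero => exact ⟨0, Nat.zero_le _⟩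
    | succ N ihN =>
      obtain ⟨i, hi⟩ := ihN
      obtain ⟨i', hii', hCD'⟩ := hepoch i
      refine ⟨i' + 1, ?_⟩
      rw [(hspec i').2.2.1 hCD']
      have := htmono i i' hii'
      omega
  refine ⟨C, a, rfl, hmemC, ha1, ha2, ?_⟩
  intro g
  obtain ⟨j, hj⟩ := he g
  obtain ⟨i, hi⟩ := htunb (j + 1)
  obtain ⟨i', hii', hCD'⟩ := hepoch i
  refine ⟨i', ?_⟩
  rw [hCD']
  exact hDmono i i' hii' (hj ▸ htar i j (by omega))

end Chain
namespace CantorEnc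

/-- Length of the block encoding value `v` with cap `m`: `true^v ++ [false]` if `v < m`,
`true^m` if `v = m`. -/
def blockLen (m v : ℕ) : ℕ := if v < m then v + 1 else m

lemma one_le_blockLen {m v : ℕ} (hm : 1 ≤ m) : 1 ≤ blockLen m v := by
  unfold blockLen; split <;> omega

variable {d : ℕ → ℕ}

/-- Offsets of the blocks in the encoded sequence. -/
def offs (d : ℕ → ℕ) (x : ∀ i, Fin (d i)) : ℕ → ℕ
  | 0 => 0
  | i + 1 => offs d x i + blockLen (d i - 1) (x i)

/-- The block index containing position `n`. -/
def bIdx (d : ℕ → ℕ) (x : ∀ i, Fin (d i)) (n : ℕ) : ℕ :=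
  Nat.findGreatest (fun i => offs d x i ≤ n) n

/-- The encoding map to the Cantor space. -/
def enc (d : ℕ → ℕ) (x : ∀ i, Fin (d i)) : ℕ → Bool :=
  fun n => decide (n - offs d x (bIdx d x n) < (x (bIdx d x n) : ℕ))

/-- Length of the run of `true`s starting at `p`, capped at `c`. -/
def run (u : ℕ → Bool) : ℕ → ℕ → ℕ
  | _, 0 => 0
  | p, c + 1 => if u p then run u (p + 1) c + 1 else 0

/-- Decoded block positions. -/
def dpos (d : ℕ → ℕ) (u : ℕ → Bool) : ℕ → ℕ
  | 0 => 0
  | i + 1 => dpos d u i + blockLen (d i - 1) (run u (dpos d u i) (d i - 1))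

lemma run_le (u : ℕ → Bool) (p c : ℕ) : run u p c ≤ c := by
  induction c generalizing p with
  | zero => simp [run]
  | succ c ih =>
    rw [run]
    split
    · have := ih (p + 1); omega
    · omega

/-- The decoding map from the Cantor space. -/
def dec (d : ℕ → ℕ) (hd : ∀ i, 2 ≤ d i) (u : ℕ → Bool) : ∀ i, Fin (d i) :=
  fun i => ⟨run u (dpos d u i) (d i - 1), by
    have h1 := run_le u (dpos d u i) (d i - 1)
    have h2 := hd i
    omega⟩

lemma run_eq_of_true (u : ℕ → Bool) {p c : ℕ} (h : ∀ j < c, u (p + j) = true) :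
    run u p c = c := by
  induction c generalizing p with
  | zero => simp [run]
  | succ c ih =>
    rw [run]
    have h0 : u p = true := by simpa using h 0 (by omega)
    rw [h0]
    simp only [if_true]
    rw [ih (fun j hj => by
      have := h (j + 1) (by omega)
      rwa [show p + 1 + j = p + (j + 1) by omega])]

lemma run_eq_of_false (u : ℕ → Bool) {p c v : ℕ} (hv : v < c)
    (ht : ∀ j < v, u (p + j) = true) (hf : u (p + v) = false) :
    run u p c = v := by
  induction c generalizing p v with
  | zero => omega
  | succ c ih =>
    rw [run]
    by_cases h0 : v = 0
    · subst h0
      simp only [show u p = false by simpa using hf]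
      simp
    · have hup : u p = true := by simpa using ht 0 (by omega)
      rw [hup]
      simp only [if_true]
      have : run u (p + 1) c = v - 1 := by
        apply ih (by omega)
        · intro j hj
          have := ht (j + 1) (by omega)
          rwa [show p + 1 + j = p + (j + 1) by omega]
        · rwa [show p + 1 + (v - 1) = p + v by omega]
      omega

lemma run_true_of_lt (u : ℕ → Bool) {p c v : ℕ} (h : run u p c = v) :
    ∀ j < v, u (p + j) = true := by
  induction c generalizing p v with
  | zero => simp [run] at h; omega
  | succ c ih =>
    rw [run] at h
    by_cases h0 : u p = true
    · rw [h0] at h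
      simp only [if_true] at h
      intro j hj
      rcases Nat.eq_zero_or_pos j with hj0 | hj0
      · subst hj0; simpa using h0
      · have hrec : run u (p + 1) c = v - 1 := by omega
        have := ih hrec (j - 1) (by omega)
        rwa [show p + 1 + (j - 1) = p + j by omega] at this
    · rw [if_neg h0] at h
      omega

lemma run_false_at (u : ℕ → Bool) {p c v : ℕ} (h : run u p c = v) (hv : v < c) :
    u (p + v) = false := by
  induction c generalizing p v with
  | zero => omega
  | succ c ih =>
    rw [run] at h
    by_cases h0 : u p = true
    · rw [h0] at h
      simp only [if_true] at h
      have : run u (p + 1) c = v - 1 := by omega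
      have hv1 : 1 ≤ v := by omega
      have := ih this (by omega)
      rwa [show p + 1 + (v - 1) = p + v by omega] at this
    · rw [if_neg h0] at h
      subst h
      simp only [Bool.not_eq_true] at h0
      simpa using h0

section withhd

variable (hd : ∀ i, 2 ≤ d i) (x : ∀ i, Fin (d i))

lemma offs_succ (i : ℕ) : offs d x (i + 1) = offs d x i + blockLen (d i - 1) (x i) := rfl

include hd

lemma offs_lt_succ (i : ℕ) : offs d x i < offs d x (i + 1) := by
  rw [offs_succ]
  have := one_le_blockLen (m := d i - 1) (v := (x i : ℕ)) (by have := hd i; omega)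
  omega

lemma le_offs (i : ℕ) : i ≤ offs d x i := by
  induction i with
  | zero => exact Nat.zero_le _
  | succ i ih => have := offs_lt_succ hd x i; omega

lemma offs_mono {i j : ℕ} (hij : i ≤ j) : offs d x i ≤ offs d x j := by
  induction j with
  | zero => rw [Nat.le_zero.1 hij]
  | succ j ih =>
    rcases eq_or_lt_of_le hij with h | h
    · rw [h]
    · have h1 := ih (by omega)
      have h2 := offs_lt_succ hd x j
      omega

lemma bIdx_eq {i n : ℕ} (h1 : offs d x i ≤ n) (h2 : n < offs d x (i + 1)) :
    bIdx d x n = i := by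
  rw [bIdx, Nat.findGreatest_eq_iff]
  refine ⟨(le_offs hd x i).trans h1, fun _ => h1, ?_⟩
  intro j hj hjn hoffs
  have : offs d x (i + 1) ≤ offs d x j := offs_mono hd x hj
  omega

lemma bIdx_spec (n : ℕ) :
    offs d x (bIdx d x n) ≤ n ∧ n < offs d x (bIdx d x n + 1) := by
  constructor
  · exact Nat.findGreatest_spec (P := fun i => offs d x i ≤ n) (Nat.zero_le n)
      (show offs d x 0 ≤ n from Nat.zero_le n)
  · by_contra hcon
    push_neg at hcon
    have h1 : bIdx d x n + 1 ≤ n := by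
      have := le_offs hd x (bIdx d x n + 1)
      omega
    exact Nat.findGreatest_is_greatest (Nat.lt_succ_self _) h1 hcon

lemma enc_block {i n : ℕ} (h1 : offs d x i ≤ n) (h2 : n < offs d x (i + 1)) :
    enc d x n = decide (n - offs d x i < (x i : ℕ)) := by
  rw [enc, bIdx_eq hd x h1 h2]

/-- The run starting at a block offset of an encoded sequence recovers the value. -/
lemma run_block (i : ℕ) :
    run (enc d x) (offs d x i) (d i - 1) = (x i : ℕ) := by
  set m := d i - 1 with hm
  set v := (x i : ℕ) with hv
  have hvm : v ≤ m := by
    have := (x i).2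
    omega
  have htrue : ∀ j < v, enc d x (offs d x i + j) = true := by
    intro j hj
    have h2 : offs d x i + j < offs d x (i + 1) := by
      rw [offs_succ]
      have : 1 ≤ blockLen m v := one_le_blockLen (by have := hd i; omega)
      unfold blockLen at *
      split <;> omega
    rw [enc_block hd x (by omega) h2]
    simp only [decide_eq_true_eq]
    omega
  by_cases hlt : v < m
  · apply run_eq_of_false _ hlt htrue
    have h2 : offs d x i + v < offs d x (i + 1) := by
      rw [offs_succ]
      unfold blockLen
      split <;> omega
    rw [enc_block hd x (by omega) h2]
    simp [hv]
  · have hveq : v = m := by omega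
    rw [hveq]
    apply run_eq_of_true
    intro j hj
    exact htrue j (by omega)

lemma dpos_enc (i : ℕ) : dpos d (enc d x) i = offs d x i := by
  induction i with
  | zero => rfl
  | succ i ih =>
    rw [dpos, offs_succ, ih, run_block hd x i]

lemma dec_enc : dec d hd (enc d x) = x := by
  funext i
  apply Fin.ext
  show run (enc d x) (dpos d (enc d x) i) (d i - 1) = (x i : ℕ)
  rw [dpos_enc hd x i, run_block hd x i]

lemma offs_dec (u : ℕ → Bool) (i : ℕ) : offs d (dec d hd u) i = dpos d u i := by
  induction i with
  | zero => rfl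
  | succ i ih =>
    rw [offs_succ, dpos, ih]
    rfl

lemma enc_dec (u : ℕ → Bool) : enc d (dec d hd u) = u := by
  funext n
  set x := dec d hd u with hx
  obtain ⟨h1, h2⟩ := bIdx_spec hd x n
  set I := bIdx d x n with hI
  rw [enc_block hd x h1 h2]
  set j := n - offs d x I with hj
  have hn : n = offs d x I + j := by omega
  set v := (x I : ℕ) with hv
  have hrun : run u (offs d x I) (d I - 1) = v := by
    rw [offs_dec hd u I]
    rfl
  have hvm : v ≤ d I - 1 := by
    have := run_le u (offs d x I) (d I - 1)
    omega
  have hblock : j < blockLen (d I - 1) v := by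
    rw [offs_succ] at h2
    rw [hv]
    omega
  by_cases hlt : v < d I - 1
  · have hj2 : j ≤ v := by
      unfold blockLen at hblock
      rw [if_pos hlt] at hblock
      omega
    rcases eq_or_lt_of_le hj2 with hje | hjl
    · have := run_false_at u hrun hlt
      rw [hn, hje]
      simp [this]
    · have := run_true_of_lt u hrun j hjl
      rw [hn]
      simp [this]
      omega
  · have hveq : v = d I - 1 := by omega
    have hjv : j < v := by
      unfold blockLen at hblock
      rw [if_neg hlt] at hblock
      omega
    have := run_true_of_lt u hrun j hjv
    rw [hn]
    simp [this]
    omega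

/-- The encoding only depends on the first `n + 1` coordinates. -/
lemma enc_congr {y : ∀ i, Fin (d i)} {n : ℕ} (h : ∀ j ≤ n, x j = y j) :
    enc d x n = enc d y n := by
  have hoffs : ∀ i ≤ n + 1, offs d x i = offs d y i := by
    intro i hi
    induction i with
    | zero => rfl
    | succ i ih =>
      rw [offs_succ, offs_succ, ih (by omega), h i (by omega)]
  obtain ⟨h1, h2⟩ := bIdx_spec hd x n
  set I := bIdx d x n with hI
  have hIle : I ≤ n := by
    have := le_offs hd x I
    omega
  have hIy : bIdx d y n = I := by
    apply bIdx_eq hd y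
    · rw [← hoffs I (by omega)]; exact h1
    · rw [← hoffs (I + 1) (by omega)]; exact h2
  rw [enc, enc, hIy, hI]
  rw [← hoffs I (by omega), ← h I hIle]

lemma continuous_enc : Continuous (enc d) := by
  apply continuous_pi
  intro n
  let R : (∀ i, Fin (d i)) → (∀ i : Fin (n + 1), Fin (d i.1)) := fun x i => x i.1
  have hR : Continuous R := continuous_pi fun i => continuous_apply i.1
  let ext : (∀ i : Fin (n + 1), Fin (d i.1)) → ∀ i, Fin (d i) := fun z i =>
    if h : i < n + 1 then z ⟨i, h⟩ else ⟨0, by have := hd i; omega⟩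
  have : (fun x => enc d x n) = (fun z => enc d (ext z) n) ∘ R := by
    funext x
    exact (enc_congr hd (ext (R x)) (fun j hj => by simp [ext, R, Nat.lt_succ_of_le hj, Nat.not_lt.2 hj])).symm
  rw [this]
  exact Continuous.comp (continuous_of_discreteTopology) hR

end withhd

/-- The product of finite discrete spaces with at least two points each is homeomorphic
to the Cantor space. -/
noncomputable def cantorHomeo (d : ℕ → ℕ) (hd : ∀ i, 2 ≤ d i) :
    (∀ i, Fin (d i)) ≃ₜ (ℕ → Bool) :=
  Continuous.homeoOfEquivCompactToT2
    (f := ⟨enc d, dec d hd, fun x => dec_enc hd x, fun u => enc_dec hd u⟩)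
    (continuous_enc hd)

end CantorEnc
section Part2Aux

variable {G : Type*} [Group G] {A : Type*} {𝒞 : Set (Finset G)} {S : Finset G}
  {T : Set (S → A)} {k : ℕ}

/-- Extend a pattern on a finite set to the whole group by a junk value. -/
noncomputable def extPat [Nonempty A] (C : Finset G) (ρ : C → A) : G → A :=
  fun g => if h : g ∈ C then ρ ⟨g, h⟩ else Classical.arbitrary A

/-- The set of legal values at the new corner `aa`, given the pattern `ρ` on `C`. -/
noncomputable def Bset [Nonempty A] (S : Finset G) (T : Set (S → A)) (C : Finset G)
    (aa : G) (ρ : C → A) : Set A :=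
  {b | legalOn S T (Function.update (extPat C ρ) aa b) (insert aa C)}

/-- A set of known finite cardinality is equivalent to `Fin n`. -/
noncomputable def BEquivAux [Fintype A] (B : Set A) {n : ℕ} (h : B.ncard = n) :
    B ≃ Fin n := by
  haveI : Fintype B := (Set.toFinite B).fintype
  apply Fintype.equivFinOfCardEq
  rw [Fintype.card_eq_nat_card, Nat.card_coe_set_eq, h]

lemma BEquivAux_congr [Fintype A] {B B' : Set A} (hBB : B = B') {n : ℕ}
    (h : B.ncard = n) (h' : B'.ncard = n) {b b' : A} (hb : b ∈ B) (hb' : b' ∈ B')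
    (hbb : b = b') : BEquivAux B h ⟨b, hb⟩ = BEquivAux B' h' ⟨b', hb'⟩ := by
  subst hBB; subst hbb; rfl

lemma BEquivAux_symm_val [Fintype A] {B B' : Set A} (hBB : B = B') {n : ℕ}
    (h : B.ncard = n) (h' : B'.ncard = n) {b : A} (hb : b ∈ B') :
    ((BEquivAux B h).symm (BEquivAux B' h' ⟨b, hb⟩) : A) = b := by
  subst hBB
  show ((BEquivAux B h).symm (BEquivAux B h ⟨b, hb⟩) : A) = b
  rw [Equiv.symm_apply_apply]

lemma BEquivAux_apply_symm [Fintype A] {B B' : Set A} (hBB : B = B') {n : ℕ}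
    (h : B.ncard = n) (h' : B'.ncard = n) (v : Fin n)
    (hb : ((BEquivAux B' h').symm v : A) ∈ B) :
    BEquivAux B h ⟨((BEquivAux B' h').symm v : A), hb⟩ = v := by
  subst hBB
  have : (⟨((BEquivAux B h').symm v : A), hb⟩ : B) = (BEquivAux B h').symm v :=
    Subtype.ext rfl
  show BEquivAux B h' ⟨((BEquivAux B h').symm v : A), hb⟩ = v
  rw [this, Equiv.apply_symm_apply]

lemma extPat_legal [Nonempty A] {C : Finset G} {x : G → A} (hx : legalOn S T x C) :
    legalOn S T (extPat C (fun s : C => x s)) C := by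
  apply legalOn_congr (p := x) (fun g hg => by simp [extPat, hg]) hx

lemma mem_Bset [Nonempty A] {C : Finset G} {aa : G} (ha : aa ∉ C) {x : G → A}
    (hx : legalOn S T x (insert aa C)) :
    x aa ∈ Bset S T C aa (fun s : C => x s) := by
  show legalOn S T (Function.update (extPat C (fun s : C => x s)) aa (x aa)) (insert aa C)
  apply legalOn_congr (p := x) ?_ hx
  intro g hg
  rcases Finset.mem_insert.1 hg with h | h
  · subst h; simp [Function.update]
  · have hne : g ≠ aa := fun he => ha (he ▸ h)
    simp [Function.update, hne, extPat, h]

lemma Bset_card [Nonempty A] [Fintype A] (hconv : IsConvexoid 𝒞) (hucp : SUCP 𝒞 S)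
    (htep : IsTEP 𝒞 S T k) {C : Finset G} (hC : C ∈ 𝒞) {aa : G} (ha : aa ∉ C)
    (hins : insert aa C ∈ 𝒞) {ρ : C → A} (hleg : legalOn S T (extPat C ρ) C) :
    (Bset S T C aa ρ).ncard =
      if (∃ g : G, aa ∈ g • S ∧ g • S ⊆ insert aa C) then k else Fintype.card A := by
  rcases step_count hconv hucp htep hC ha hins hleg with ⟨hno, hall⟩ | ⟨hyes, hcount⟩
  · rw [if_neg hno]
    have : Bset S T C aa ρ = Set.univ := Set.eq_univ_of_forall (fun b => hall b)
    rw [this, Set.ncard_univ, Nat.card_eq_fintype_card]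
  · rw [if_pos hyes]
    exact hcount

end Part2Aux
section Part2Main

variable {G : Type*} [Group G] {A : Type*} {𝒞 : Set (Finset G)} {S : Finset G}
  {T : Set (S → A)} {k : ℕ}

lemma part2_main [Countable G] [Fintype A] [TopologicalSpace A] [DiscreteTopology A]
    (hS : 2 ≤ S.card) (hconv : IsConvexoid 𝒞) (hucp : SUCP 𝒞 S)
    (htep : IsTEP 𝒞 S T k) (hk : 2 ≤ k) (hA : Nonempty A) :
    Nonempty ((TEPX S T) ≃ₜ (ℕ → Bool)) := by
  haveI := hA
  haveI : Infinite G := G_infinite hS hconv hucp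
  obtain ⟨C, a, hC0, hCmem, haC, hCsucc, hexh⟩ := exists_chain hconv
  have hCmono : ∀ i j, i ≤ j → C i ⊆ C j := by
    intro i j hij
    induction j with
    | zero => rw [Nat.le_zero.1 hij]
    | succ j ih =>
      rcases eq_or_lt_of_le hij with h | h
      · rw [h]
      · exact (ih (by omega)).trans (by rw [hCsucc j]; exact Finset.subset_insert _ _)
  have hfinsub : ∀ F : Finset G, ∃ i, F ⊆ C i := by
    intro F
    induction F using Finset.induction_on with
    | empty => exact ⟨0, Finset.empty_subset _⟩
    | @insert g F hg ih =>
      obtain ⟨i₁, h₁⟩ := ih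
      obtain ⟨i₂, h₂⟩ := hexh g
      exact ⟨max i₁ i₂, Finset.insert_subset (hCmono i₂ _ (le_max_right _ _) h₂)
        (h₁.trans (hCmono i₁ _ (le_max_left _ _)))⟩
  -- `k` is at most the alphabet size
  have hkA : k ≤ Fintype.card A := by
    obtain ⟨j, hj⟩ := hfinsub S
    have hfind : ∃ i, S ⊆ C i := ⟨j, hj⟩
    have hj₀ : S ⊆ C (Nat.find hfind) := Nat.find_spec hfind
    have hj₀ne : Nat.find hfind ≠ 0 := by
      intro h
      rw [h, hC0] at hj₀
      have hcard := Finset.card_le_card hj₀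
      rw [Finset.card_empty] at hcard
      omega
    obtain ⟨i, hi⟩ := Nat.exists_eq_succ_of_ne_zero hj₀ne
    have hni : ¬ S ⊆ C i := Nat.find_min hfind (by omega)
    obtain ⟨s, hsS, hsn⟩ := Finset.not_subset.1 hni
    have hSsub : S ⊆ C (i + 1) := by
      rw [show i + 1 = Nat.find hfind from by omega]
      exact hj₀
    have hsa : s = a i := by
      have : s ∈ C (i + 1) := hSsub hsS
      rw [hCsucc i] at this
      rcases Finset.mem_insert.1 this with h | h
      · exact h
      · exact absurd h hsn
    have hcorner : IsTranslatedLaxCorner 𝒞 S ⟨s, hsS⟩ := by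
      refine ⟨1, fun hmem => ?_⟩
      have hsub : ((1 : G) • S).erase (1 * s) ⊆ C i := by
        rw [one_smul, one_mul]
        intro y hy
        obtain ⟨hyne, hyS⟩ := Finset.mem_erase.1 hy
        have : y ∈ C (i + 1) := hSsub hyS
        rw [hCsucc i] at this
        rcases Finset.mem_insert.1 this with h | h
        · exact absurd (h.trans hsa.symm) hyne
        · exact h
      have h2 := memClosure_mono hsub hmem
      rw [one_mul] at h2
      exact not_mem_memClosure_self (hCmem i) hsn h2
    have huni := htep ⟨s, hsS⟩ hcorner (fun _ => Classical.arbitrary A)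
    rw [← huni]
    exact le_trans (Set.ncard_le_ncard (Set.subset_univ _) Set.finite_univ)
      (le_of_eq (by rw [Set.ncard_univ, Nat.card_eq_fintype_card]))
  -- the branching numbers
  set d : ℕ → ℕ := fun i =>
    if (∃ g : G, a i ∈ g • S ∧ g • S ⊆ insert (a i) (C i)) then k else Fintype.card A
    with hd_def
  have hd : ∀ i, 2 ≤ d i := by
    intro i
    rw [show d i = if (∃ g : G, a i ∈ g • S ∧ g • S ⊆ insert (a i) (C i)) then k
      else Fintype.card A from rfl]
    split
    · exact hk
    · omega
  -- the restriction maps and the coordinate maps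
  set res : ∀ i, (TEPX S T) → (↥(C i) → A) := fun i x s => x.1 s with hres
  have hcardF : ∀ i (ρ : (↥(C i) → A)),
      legalOn S T (extPat (C i) ρ) (C i) → (Bset S T (C i) (a i) ρ).ncard = d i := by
    intro i ρ hleg
    rw [Bset_card hconv hucp htep (hCmem i) (haC i)
      (by rw [← hCsucc i]; exact hCmem (i + 1)) hleg]
  have hlegres : ∀ i (x : TEPX S T), legalOn S T (extPat (C i) (res i x)) (C i) :=
    fun i x => extPat_legal (legalOn_TEPX x.2 (C i))
  have hcardres : ∀ i (x : TEPX S T), (Bset S T (C i) (a i) (res i x)).ncard = d i :=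
    fun i x => hcardF i (res i x) (hlegres i x)
  have hmemres : ∀ i (x : TEPX S T), x.1 (a i) ∈ Bset S T (C i) (a i) (res i x) :=
    fun i x => mem_Bset (haC i) (by rw [← hCsucc i]; exact legalOn_TEPX x.2 (C (i + 1)))
  set Φ : (TEPX S T) → (∀ i, Fin (d i)) := fun x i =>
    BEquivAux (Bset S T (C i) (a i) (res i x)) (hcardres i x) ⟨x.1 (a i), hmemres i x⟩
    with hΦ
  -- the inverse construction
  have hC0legal : ∀ ρ : (↥(C 0) → A), legalOn S T (extPat (C 0) ρ) (C 0) := by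
    intro ρ
    apply legalOn_of_card_lt
    rw [hC0, Finset.card_empty]
    omega
  have hstep : ∀ i (ρ : (↥(C i) → A)), legalOn S T (extPat (C i) ρ) (C i) →
      ∀ b : A, b ∈ Bset S T (C i) (a i) ρ →
      legalOn S T (extPat (C (i + 1)) (fun s : ↥(C (i + 1)) =>
        if h : (s : G) ∈ C i then ρ ⟨s, h⟩ else b)) (C (i + 1)) := by
    intro i ρ hρ b hb
    have hb' : legalOn S T (Function.update (extPat (C i) ρ) (a i) b)
        (insert (a i) (C i)) := hb
    have hb'' : legalOn S T (Function.update (extPat (C i) ρ) (a i) b) (C (i + 1)) := by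
      rw [hCsucc i]; exact hb'
    apply legalOn_congr ?_ hb''
    intro g hg
    have hg' : g ∈ insert (a i) (C i) := by rw [← hCsucc i]; exact hg
    rcases Finset.mem_insert.1 hg' with h | h
    · subst h
      simp [Function.update, extPat, hg, haC i]
    · have hne : g ≠ a i := fun he => haC i (he ▸ h)
      simp [Function.update, extPat, hne, hg, h]
  set F : (∀ i, Fin (d i)) →
      ∀ i, {ρ : (↥(C i) → A) // legalOn S T (extPat (C i) ρ) (C i)} :=
    fun c => fun i => Nat.rec
      (motive := fun i => {ρ : (↥(C i) → A) //
        legalOn S T (extPat (C i) ρ) (C i)})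
      ⟨fun _ => Classical.arbitrary A, hC0legal _⟩
      (fun i prev =>
        ⟨fun s => if h : (s : G) ∈ C i then prev.1 ⟨s, h⟩
            else ((BEquivAux (Bset S T (C i) (a i) prev.1)
              (hcardF i prev.1 prev.2)).symm (c i) : A),
          hstep i prev.1 prev.2 _
            ((BEquivAux (Bset S T (C i) (a i) prev.1)
              (hcardF i prev.1 prev.2)).symm (c i)).2⟩) i
    with hF
  have hFsucc : ∀ c i (s : ↥(C (i + 1))), (F c (i + 1)).1 s =
      if h : (s : G) ∈ C i then (F c i).1 ⟨s, h⟩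
      else ((BEquivAux (Bset S T (C i) (a i) (F c i).1)
        (hcardF i (F c i).1 (F c i).2)).symm (c i) : A) := fun c i s => rfl
  set q : (∀ i, Fin (d i)) → G → A :=
    fun c g => (F c (Nat.find (hexh g))).1 ⟨g, Nat.find_spec (hexh g)⟩ with hq
  have hcoh : ∀ c i j, i ≤ j → ∀ (g : G) (hgi : g ∈ C i) (hgj : g ∈ C j),
      (F c j).1 ⟨g, hgj⟩ = (F c i).1 ⟨g, hgi⟩ := by
    intro c i j
    induction j with
    | zero =>
      intro hij g hgi hgj
      have h0 : i = 0 := by omega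
      subst h0
      rfl
    | succ j ih =>
      intro hij g hgi hgj
      rcases eq_or_lt_of_le hij with h | h
      · subst h
        rfl
      · have hij' : i ≤ j := by omega
        have hgj' : g ∈ C j := hCmono i j hij' hgi
        rw [hFsucc c j ⟨g, hgj⟩]
        rw [dif_pos hgj']
        exact ih hij' g hgi hgj'
  have hqres : ∀ c i (g : G) (hgi : g ∈ C i), q c g = (F c i).1 ⟨g, hgi⟩ := by
    intro c i g hgi
    show (F c (Nat.find (hexh g))).1 ⟨g, Nat.find_spec (hexh g)⟩ = (F c i).1 ⟨g, hgi⟩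
    rcases le_total (Nat.find (hexh g)) i with h | h
    · exact (hcoh c _ i h g (Nat.find_spec (hexh g)) hgi).symm
    · exact hcoh c i _ h g hgi (Nat.find_spec (hexh g))
  have hqX : ∀ c, q c ∈ TEPX S T := by
    intro c g
    obtain ⟨i, hi⟩ := hfinsub (g • S)
    have hlegq : legalOn S T (q c) (C i) := by
      apply legalOn_congr (p := extPat (C i) (F c i).1) ?_ (F c i).2
      intro g' hg'
      rw [hqres c i g' hg']
      simp [extPat, hg']
    exact hlegq g hi
  -- left inverse
  have hFΦ : ∀ (x : TEPX S T) i (s : ↥(C i)), (F (Φ x) i).1 s = x.1 s := by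
    intro x i
    induction i with
    | zero =>
      intro s
      exact absurd ((Finset.ext_iff.mp hC0 (s : G)).mp s.2) (Finset.notMem_empty _)
    | succ i ih =>
      intro s
      rw [hFsucc]
      by_cases h : (s : G) ∈ C i
      · rw [dif_pos h]
        exact ih ⟨s, h⟩
      · rw [dif_neg h]
        have hsa : (s : G) = a i := by
          have h2 := (Finset.ext_iff.mp (hCsucc i) (s : G)).mp s.2
          rcases Finset.mem_insert.1 h2 with h' | h'
          · exact h'
          · exact absurd h' h
        have hρ : (F (Φ x) i).1 = res i x := funext (fun t => ih t)
        rw [show x.1 (s : G) = x.1 (a i) from congrArg x.1 hsa]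
        exact BEquivAux_symm_val (congrArg (Bset S T (C i) (a i)) hρ)
          (hcardF i (F (Φ x) i).1 (F (Φ x) i).2) (hcardres i x) (hmemres i x)
  have hleft : ∀ x : TEPX S T, (⟨q (Φ x), hqX (Φ x)⟩ : TEPX S T) = x := by
    intro x
    apply Subtype.ext
    funext g
    show q (Φ x) g = x.1 g
    obtain ⟨i, hi⟩ := hexh g
    rw [hqres (Φ x) i g hi]
    exact hFΦ x i ⟨g, hi⟩
  -- right inverse
  have hright : ∀ c, Φ ⟨q c, hqX c⟩ = c := by
    intro c
    funext i
    have hρ : res i (⟨q c, hqX c⟩ : TEPX S T) = (F c i).1 :=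
      funext (fun s => hqres c i s s.2)
    have hai : a i ∈ C (i + 1) := by
      rw [hCsucc i]; exact Finset.mem_insert_self _ _
    have hqa : q c (a i) = ((BEquivAux (Bset S T (C i) (a i) (F c i).1)
        (hcardF i (F c i).1 (F c i).2)).symm (c i) : A) := by
      rw [hqres c (i + 1) (a i) hai]
      rw [hFsucc]
      rw [dif_neg (haC i)]
    have hmem' : q c (a i) ∈ Bset S T (C i) (a i) (res i (⟨q c, hqX c⟩ : TEPX S T)) :=
      hmemres i ⟨q c, hqX c⟩
    have hb' : ((BEquivAux (Bset S T (C i) (a i) (F c i).1)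
        (hcardF i (F c i).1 (F c i).2)).symm (c i) : A)
        ∈ Bset S T (C i) (a i) (res i (⟨q c, hqX c⟩ : TEPX S T)) := hqa ▸ hmem'
    show BEquivAux (Bset S T (C i) (a i) (res i (⟨q c, hqX c⟩ : TEPX S T)))
      (hcardres i ⟨q c, hqX c⟩) ⟨q c (a i), hmem'⟩ = c i
    rw [BEquivAux_congr rfl (hcardres i ⟨q c, hqX c⟩) (hcardres i ⟨q c, hqX c⟩)
      hmem' hb' hqa]
    exact BEquivAux_apply_symm (congrArg (Bset S T (C i) (a i)) hρ)
      (hcardres i ⟨q c, hqX c⟩) (hcardF i (F c i).1 (F c i).2) (c i) hb'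
  -- continuity
  haveI : CompactSpace (TEPX S T) :=
    isCompact_iff_compactSpace.mp ((isClosed_TEPX (S := S) (T := T)).isCompact)
  have hcont : Continuous Φ := by
    apply continuous_pi
    intro i
    set R : (TEPX S T) → (↥(C (i + 1)) → A) := fun x s => x.1 s with hR
    have hRc : Continuous R :=
      continuous_pi fun s => (continuous_apply ((s : G))).comp continuous_subtype_val
    have hloc : ∀ (x y : TEPX S T), R x = R y → Φ x i = Φ y i := by
      intro x y hxy
      have hag : ∀ g, g ∈ C (i + 1) → x.1 g = y.1 g := by
        intro g hg
        exact congrFun hxy ⟨g, hg⟩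
      have hρ : res i x = res i y :=
        funext fun s => hag s (hCmono i (i + 1) (by omega) s.2)
      have hai : a i ∈ C (i + 1) := by
        rw [hCsucc i]; exact Finset.mem_insert_self _ _
      show BEquivAux (Bset S T (C i) (a i) (res i x)) (hcardres i x)
          ⟨x.1 (a i), hmemres i x⟩
        = BEquivAux (Bset S T (C i) (a i) (res i y)) (hcardres i y)
          ⟨y.1 (a i), hmemres i y⟩
      exact BEquivAux_congr (congrArg (Bset S T (C i) (a i)) hρ) _ _ _ _ (hag (a i) hai)
    set h : (↥(C (i + 1)) → A) → Fin (d i) := fun τ =>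
      if hex : ∃ x : TEPX S T, R x = τ then Φ (Classical.choose hex) i
      else ⟨0, by have := hd i; omega⟩ with hh
    have hfact : (fun x : TEPX S T => Φ x i) = h ∘ R := by
      funext x
      show Φ x i = h (R x)
      have hex : ∃ y : TEPX S T, R y = R x := ⟨x, rfl⟩
      show Φ x i = if hex' : ∃ y : TEPX S T, R y = R x then Φ (Classical.choose hex') i
        else ⟨0, by have := hd i; omega⟩
      rw [dif_pos hex]
      exact (hloc _ x (Classical.choose_spec hex)).symm
    rw [hfact]
    exact (continuous_of_discreteTopology).comp hRc
  -- conclusion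
  set e : (TEPX S T) ≃ (∀ i, Fin (d i)) :=
    ⟨Φ, fun c => ⟨q c, hqX c⟩, hleft, hright⟩ with he
  have homeo1 : (TEPX S T) ≃ₜ (∀ i, Fin (d i)) :=
    Continuous.homeoOfEquivCompactToT2 (f := e) hcont
  exact ⟨homeo1.trans (CantorEnc.cantorHomeo d hd)⟩

end Part2Main
/-- A `1`-TEP subshift with `|S| ≥ 2` has at least `|A|^(|S|-1)` configurations;
a `k`-TEP subshift with `k ≥ 2` (and `A` nonempty) is homeomorphic to the Cantor set. -/
theorem stmt10 {G : Type*} [Group G] [Countable G] (S : Finset G) (hS : 2 ≤ S.card)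
    (𝒞 : Set (Finset G)) (hconv : IsConvexoid 𝒞) (hucp : SUCP 𝒞 S)
    {A : Type*} [Fintype A] [TopologicalSpace A] [DiscreteTopology A]
    (T : Set (S → A)) (k : ℕ) (htep : IsTEP 𝒞 S T k) :
    (k = 1 →
      (Fintype.card A : Cardinal) ^ (S.card - 1) ≤ Cardinal.mk (TEPX S T)) ∧
    (2 ≤ k → Nonempty A → Nonempty ((TEPX S T) ≃ₜ (ℕ → Bool))) := by
  constructor
  · intro hk
    subst hk
    exact part1_main hS hconv hucp htep
  · intro hk hA
    exact part2_main hS hconv hucp htep hk hA
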